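/- With the same setup: if T/J ≅ F (the residue field) and Σ_{g∈N} m_g > 1, then the ideal J of T is not principal. -/

import Mathlib

set_option maxHeartbeats 1000000
set_option synthInstance.maxHeartbeats 400000

/-- Same setup: `O` a complete DVR with uniformizer `ϖ` and finite residue field `F`,
`T ⊆ ∏_{g ∈ ι} O` a full-rank local complete `O`-subalgebra, and `J ⊆ T` an ideal with
residue images `ϖ^{m g} O` (`m g ≥ 1`).  If `T/J ≅ F` and `Σ_g m g > 1`, then the
ideal `J` of `T` is not principal. -/
theorem stmt9 (O : Type*) [CommRing O] [IsDomain O] [IsDiscreteValuationRing O]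
    [IsAdicComplete (IsLocalRing.maximalIdeal O) O]
    (ϖ : O) (hϖ : Irreducible ϖ) [Finite (O ⧸ Ideal.span {ϖ})]
    (ι : Type*) [Fintype ι] [Nonempty ι]
    (T : Subalgebra O (ι → O)) [IsLocalRing T]
    (hfull : ∀ x : ι → O, ∃ n : ℕ, ϖ ^ n • x ∈ T)
    (J : Ideal T)
    (m : ι → ℕ) (hm : ∀ g, 0 < m g)
    (hTg : ∀ g : ι, Function.Surjective ((Pi.evalRingHom (fun _ : ι => O) g).comp T.val.toRingHom))
    (hJg : ∀ g : ι,
      Ideal.map ((Pi.evalRingHom (fun _ : ι => O) g).comp T.val.toRingHom) J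
        = Ideal.span {ϖ ^ m g})
    (hres : Nonempty ((T ⧸ J) ≃+* (O ⧸ Ideal.span {ϖ})))
    (hsum : 1 < ∑ g : ι, m g) :
    ¬ ∃ t : T, J = Ideal.span {t} := by
  classical
  rintro ⟨t, ht⟩
  -- J is the maximal ideal of T
  have hmaxO : (Ideal.span {ϖ}).IsMaximal := PrincipalIdealRing.isMaximal_of_irreducible hϖ
  have hFfield : IsField (O ⧸ Ideal.span {ϖ}) :=
    (Ideal.Quotient.maximal_ideal_iff_isField_quotient _).mp hmaxO
  have hTJfield : IsField (T ⧸ J) := hres.some.toMulEquiv.isField hFfield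
  have hJmax : J.IsMaximal := Ideal.Quotient.maximal_of_isField _ hTJfield
  have hJ : J = IsLocalRing.maximalIdeal T := IsLocalRing.eq_maximalIdeal hJmax
  -- ϖ • 1 is in the maximal ideal
  have hϖT : (algebraMap O T ϖ) ∈ IsLocalRing.maximalIdeal T := by
    intro hu
    have := hu.map T.val.toRingHom
    rw [show T.val.toRingHom (algebraMap O T ϖ) = algebraMap O (ι → O) ϖ by
      simp [Subalgebra.algebraMap_eq]] at this
    obtain ⟨g⟩ := ‹Nonempty ι›
    have := this.map (Pi.evalRingHom (fun _ : ι => O) g)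
    simp at this
    exact hϖ.not_isUnit this
  rw [hJ] at ht
  cases subsingleton_or_nontrivial ι with
  | inl hsub =>
    -- single component case: ϖ ∈ (ϖ ^ m g) with m g ≥ 2, contradiction
    obtain ⟨g⟩ := ‹Nonempty ι›
    have hsum' : ∑ g' : ι, m g' = m g := Fintype.sum_subsingleton m g
    rw [hsum'] at hsum
    have hmem : ϖ ∈ Ideal.map ((Pi.evalRingHom (fun _ : ι => O) g).comp T.val.toRingHom) J := by
      have : (algebraMap O T ϖ) ∈ J := hJ ▸ hϖT
      have h2 := Ideal.mem_map_of_mem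
        ((Pi.evalRingHom (fun _ : ι => O) g).comp T.val.toRingHom) this
      simpa [Subalgebra.algebraMap_eq] using h2
    rw [hJg g, Ideal.mem_span_singleton] at hmem
    have : ϖ ^ 2 ∣ ϖ := dvd_trans (pow_dvd_pow ϖ hsum) hmem
    have h1 : ϖ * ϖ ∣ ϖ * 1 := by simpa [pow_two] using this
    have : ϖ ∣ 1 := (mul_dvd_mul_iff_left hϖ.ne_zero).mp h1
    exact hϖ.not_isUnit (isUnit_of_dvd_one this)
  | inr hnt =>
    -- at least two components: T would be a domain, contradicting zero divisors
    obtain ⟨g, h, hgh⟩ := Nontrivial.exists_pair_ne (α := ι)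
    -- Noetherian setup
    haveI : Module.Finite O T :=
      Module.Finite.iff_fg.mpr (IsNoetherian.noetherian (Subalgebra.toSubmodule T))
    haveI : IsNoetherianRing T := Algebra.FiniteType.isNoetherianRing O T
    have hbot : (⨅ i : ℕ, (IsLocalRing.maximalIdeal T) ^ i) = ⊥ :=
      Ideal.iInf_pow_eq_bot_of_isLocalRing _
        (IsLocalRing.maximalIdeal.isMaximal T).ne_top
    -- t ∣ ϖ, hence powers of t are nonzero
    have htϖ : t ∣ algebraMap O T ϖ := by
      rw [← Ideal.mem_span_singleton, ← ht]; exact hϖT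
    have htpow : ∀ k : ℕ, t ^ k ≠ 0 := by
      intro k hk
      obtain ⟨c, hc⟩ := pow_dvd_pow_of_dvd htϖ k
      rw [hk, zero_mul] at hc
      have : (algebraMap O T ϖ) ^ k = 0 := hc
      have h0 : ((algebraMap O T ϖ) ^ k : T).1 g = 0 := by rw [this]; rfl
      have : ϖ ^ k = 0 := by
        simpa [Subalgebra.algebraMap_eq] using h0
      exact pow_ne_zero k hϖ.ne_zero this
    -- every nonzero element is a power of t times a unit
    have key : ∀ z : T, z ≠ 0 → ∃ (a : ℕ) (u : T), IsUnit u ∧ z = t ^ a * u := by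
      intro z hz
      have hex : ∃ k, z ∉ (IsLocalRing.maximalIdeal T) ^ k := by
        by_contra hc
        push_neg at hc
        have hz' : z ∈ (⨅ i : ℕ, (IsLocalRing.maximalIdeal T) ^ i) :=
          Ideal.mem_iInf.mpr hc
        rw [hbot] at hz'
        exact hz (Ideal.mem_bot.mp hz')
      set k := Nat.find hex with hk
      have hk0 : 0 < k := by
        rcases Nat.eq_zero_or_pos k with h0 | h0
        · exfalso
          have := Nat.find_spec hex
          rw [← hk, h0] at this
          simp at this
        · exact h0
      refine ⟨k - 1, ?_⟩
      have h1 : z ∈ (IsLocalRing.maximalIdeal T) ^ (k - 1) := by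
        have := Nat.find_min hex (show k - 1 < k from Nat.sub_lt hk0 one_pos)
        exact not_not.mp this
      have h2 : z ∉ (IsLocalRing.maximalIdeal T) ^ k := Nat.find_spec hex
      rw [ht, Ideal.span_singleton_pow, Ideal.mem_span_singleton] at h1
      obtain ⟨u, hu⟩ := h1
      refine ⟨u, ?_, hu⟩
      by_contra hnu
      have humem : u ∈ IsLocalRing.maximalIdeal T := hnu
      rw [ht, Ideal.mem_span_singleton] at humem
      obtain ⟨w, hw⟩ := humem
      apply h2
      rw [ht, Ideal.span_singleton_pow, Ideal.mem_span_singleton]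
      exact ⟨w, by rw [hu, hw, ← mul_assoc, ← pow_succ, Nat.sub_add_cancel hk0]⟩
    -- zero divisors
    obtain ⟨n1, hx⟩ := hfull (Pi.single g 1)
    obtain ⟨n2, hy⟩ := hfull (Pi.single h 1)
    set X : T := ⟨_, hx⟩ with hX
    set Y : T := ⟨_, hy⟩ with hY
    have hXg : (X : ι → O) g = ϖ ^ n1 := by
      show (ϖ ^ n1 • (Pi.single g 1 : ι → O)) g = _
      simp
    have hYh : (Y : ι → O) h = ϖ ^ n2 := by
      show (ϖ ^ n2 • (Pi.single h 1 : ι → O)) h = _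
      simp
    have hX0 : X ≠ 0 := by
      intro h0
      have : (X : ι → O) g = 0 := by rw [h0]; rfl
      rw [hXg] at this
      exact pow_ne_zero n1 hϖ.ne_zero this
    have hY0 : Y ≠ 0 := by
      intro h0
      have : (Y : ι → O) h = 0 := by rw [h0]; rfl
      rw [hYh] at this
      exact pow_ne_zero n2 hϖ.ne_zero this
    have hXY : X * Y = 0 := by
      apply Subtype.ext
      funext i
      show (ϖ ^ n1 • (Pi.single g 1 : ι → O)) i * (ϖ ^ n2 • (Pi.single h 1 : ι → O)) i = 0
      rcases eq_or_ne i g with rfl | hig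
      · simp [Pi.single_eq_of_ne hgh]
      · simp [Pi.single_eq_of_ne hig]
    obtain ⟨a, u, hu, hXeq⟩ := key X hX0
    obtain ⟨b, v, hv, hYeq⟩ := key Y hY0
    rw [hXeq, hYeq] at hXY
    have : t ^ (a + b) * (u * v) = 0 := by ring_nf; ring_nf at hXY; linear_combination hXY
    rw [(hu.mul hv).mul_left_eq_zero] at this
    exact htpow (a + b) this
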